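/- arXiv:2207.07080 — 2 statements merged into one kernel-verified Lean document; each statement's English description precedes it below -/
import Mathlib

section
/- Any function L: ℕ₊ → ℝ that is non-decreasing, satisfies L(n^m) = m·L(n) for all positive integers n, m, and satisfies L(2) = 1, must equal L(n) = log₂(n) for all n ≥ 1. -/
/-- A non-decreasing function on positive integers with L(n^m) = m·L(n) and L(2) = 1
must be log₂. -/
theorem eq_logb_of_axioms (L : ℕ → ℝ)
    (hmono : ∀ n, 1 ≤ n → L n ≤ L (n + 1))
    (hpow : ∀ n m : ℕ, 1 ≤ n → 1 ≤ m → L (n ^ m) = (m : ℝ) * L n)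
    (h2 : L 2 = 1) :
    ∀ n, 1 ≤ n → L n = Real.logb 2 n := by
  have hL1 : L 1 = 0 := by
    have h := hpow 1 2 le_rfl (by norm_num)
    norm_num at h
    linarith
  have mono : ∀ a b : ℕ, 1 ≤ a → a ≤ b → L a ≤ L b := by
    intro a b ha hab
    induction b with
    | zero => omega
    | succ b ih =>
      rcases eq_or_lt_of_le hab with rfl | h
      · exact le_rfl
      · have hab' : a ≤ b := by omega
        exact (ih hab').trans (hmono b (le_trans ha hab'))
  have hpow2 : ∀ k : ℕ, L (2 ^ k) = (k : ℝ) := by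
    intro k
    rcases Nat.eq_zero_or_pos k with rfl | hk
    · simpa using hL1
    · rw [hpow 2 k (by norm_num) hk, h2, mul_one]
  intro n hn
  rcases eq_or_lt_of_le hn with rfl | hn2
  · simp [hL1]
  have hn2 : 2 ≤ n := hn2
  have key : ∀ m : ℕ, 1 ≤ m → |L n - Real.logb 2 n| ≤ 1 / m := by
    intro m hm
    set k := Nat.log 2 (n ^ m) with hk
    have hnm : 1 ≤ n ^ m := Nat.one_le_pow _ _ (by omega)
    have hk1 : 2 ^ k ≤ n ^ m := Nat.pow_log_le_self 2 (by omega)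
    have hk2 : n ^ m < 2 ^ (k + 1) := Nat.lt_pow_succ_log_self (by norm_num) _
    -- L side
    have hLlo : (k : ℝ) ≤ (m : ℝ) * L n := by
      rw [← hpow n m (by omega) hm, ← hpow2 k]
      exact mono _ _ (Nat.one_le_two_pow) hk1
    have hLhi : (m : ℝ) * L n ≤ (k : ℝ) + 1 := by
      rw [← hpow n m (by omega) hm]
      calc L (n ^ m) ≤ L (2 ^ (k + 1)) := mono _ _ hnm hk2.le
        _ = (k : ℝ) + 1 := by rw [hpow2]; push_cast; ring
    -- log side
    have h2r : (1 : ℝ) < 2 := one_lt_two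
    have hcast1 : ((2 : ℕ) : ℝ) ^ k ≤ ((n : ℝ)) ^ m := by
      exact_mod_cast Nat.cast_le.mpr hk1
    have hcast2 : ((n : ℝ)) ^ m ≤ ((2 : ℕ) : ℝ) ^ (k + 1) := by
      exact_mod_cast Nat.cast_le.mpr hk2.le
    have hpos : (0 : ℝ) < (2 : ℝ) ^ k := by positivity
    have hloglo : (k : ℝ) ≤ (m : ℝ) * Real.logb 2 n := by
      have := Real.logb_le_logb_of_le (b := 2) one_lt_two (x := (2:ℝ)^k) (by positivity)
        (by push_cast at hcast1 ⊢; exact hcast1)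
      rw [Real.logb_pow, Real.logb_pow] at this
      simpa [Real.logb_self_eq_one] using this
    have hloghi : (m : ℝ) * Real.logb 2 n ≤ (k : ℝ) + 1 := by
      have hnpos : (0:ℝ) < (n:ℝ) ^ m := by positivity
      have := Real.logb_le_logb_of_le (b := 2) one_lt_two hnpos
        (by push_cast at hcast2 ⊢; exact hcast2)
      rw [Real.logb_pow, Real.logb_pow] at this
      simp [Real.logb_self_eq_one] at this
      push_cast
      linarith
    have hmpos : (0 : ℝ) < m := by exact_mod_cast hm
    rw [abs_sub_le_iff]
    constructor
    · rw [le_div_iff₀ hmpos]; nlinarith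
    · rw [le_div_iff₀ hmpos]; nlinarith
  have h0 : |L n - Real.logb 2 n| = 0 := by
    by_contra h
    have hpos : 0 < |L n - Real.logb 2 n| := (abs_nonneg _).lt_of_ne (Ne.symm h)
    obtain ⟨m, hm⟩ := exists_nat_gt (1 / |L n - Real.logb 2 n|)
    have hm1 : 1 ≤ m := by
      by_contra hmm
      interval_cases m
      simp at hm
      linarith [one_div_pos.mpr hpos]
    have h1 := key m hm1
    have hmpos : (0 : ℝ) < m := by exact_mod_cast hm1
    have : 1 / (m : ℝ) < |L n - Real.logb 2 n| := by
      rw [div_lt_iff₀ hmpos]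
      rw [div_lt_iff₀ hpos] at hm
      linarith
    linarith
  have := abs_eq_zero.mp h0
  linarith
end

section
/- For all positive integers n ≥ 2 and m ≥ 1, if k = ⌊m log₂ n⌋, then |m·log₂(n) − k| ≤ 1 and 2^k ≤ n^m ≤ 2^{k+1}; consequently any function L satisfying monotonicity, L(n^m)=mL(n), and L(2^k)=k satisfies |L(n) − log₂(n)| ≤ 1/m for every m, hence L(n) = log₂(n). -/
/-- For n ≥ 2, m ≥ 1 and k = ⌊m log₂ n⌋ we have |m log₂ n − k| ≤ 1 and
2^k ≤ n^m ≤ 2^(k+1); consequently any non-decreasing L with L(n^m) = m L(n) and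
L(2^k) = k satisfies |L(n) − log₂ n| ≤ 1/m for every m, hence L(n) = log₂ n. -/
theorem sandwich_logb (L : ℕ → ℝ)
    (hmono : ∀ a b : ℕ, 1 ≤ a → a ≤ b → L a ≤ L b)
    (hpow : ∀ n m : ℕ, 1 ≤ n → 1 ≤ m → L (n ^ m) = m * L n)
    (h2pow : ∀ k : ℕ, L (2 ^ k) = k) :
    ∀ n : ℕ, 2 ≤ n →
      (∀ m : ℕ, 1 ≤ m →
        |(m : ℝ) * Real.logb 2 n - (⌊(m : ℝ) * Real.logb 2 n⌋₊ : ℝ)| ≤ 1 ∧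
        2 ^ (⌊(m : ℝ) * Real.logb 2 n⌋₊) ≤ n ^ m ∧
        n ^ m ≤ 2 ^ (⌊(m : ℝ) * Real.logb 2 n⌋₊ + 1) ∧
        |L n - Real.logb 2 n| ≤ 1 / m) ∧
      L n = Real.logb 2 n := by
  intro n hn
  have hn1 : (1:ℝ) ≤ n := by exact_mod_cast le_trans (by norm_num) hn
  have hn0 : (0:ℝ) < n := lt_of_lt_of_le one_pos hn1
  have hlogb0 : 0 ≤ Real.logb 2 n := Real.logb_nonneg (by norm_num) hn1
  have key : ∀ m : ℕ, 1 ≤ m →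
      |(m : ℝ) * Real.logb 2 n - (⌊(m : ℝ) * Real.logb 2 n⌋₊ : ℝ)| ≤ 1 ∧
      2 ^ (⌊(m : ℝ) * Real.logb 2 n⌋₊) ≤ n ^ m ∧
      n ^ m ≤ 2 ^ (⌊(m : ℝ) * Real.logb 2 n⌋₊ + 1) ∧
      |L n - Real.logb 2 n| ≤ 1 / m := by
    intro m hm
    set x : ℝ := (m : ℝ) * Real.logb 2 n with hx
    have hx0 : 0 ≤ x := mul_nonneg (Nat.cast_nonneg m) hlogb0
    set k : ℕ := ⌊x⌋₊ with hk
    have hkx : (k:ℝ) ≤ x := Nat.floor_le hx0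
    have hxk : x < k + 1 := Nat.lt_floor_add_one x
    have habs : |x - (k:ℝ)| ≤ 1 := by
      rw [abs_le]
      constructor <;> linarith
    -- (n:ℝ)^m = 2 ^ x as rpow
    have hnm : ((n:ℝ)) ^ m = (2:ℝ) ^ x := by
      have h1 : (2:ℝ) ^ (Real.logb 2 n) = n :=
        Real.rpow_logb (by norm_num) (by norm_num) hn0
      rw [hx, mul_comm, Real.rpow_mul (by norm_num), h1, Real.rpow_natCast]
    have hle1R : (2:ℝ) ^ (k:ℕ) ≤ (n:ℝ) ^ m := by
      rw [hnm, ← Real.rpow_natCast 2 k]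
      exact Real.rpow_le_rpow_left_iff (by norm_num : (1:ℝ) < 2) |>.mpr hkx
    have hle2R : (n:ℝ) ^ m ≤ (2:ℝ) ^ (k + 1 : ℕ) := by
      rw [hnm, ← Real.rpow_natCast 2 (k+1)]
      refine Real.rpow_le_rpow_left_iff (by norm_num : (1:ℝ) < 2) |>.mpr ?_
      push_cast
      linarith
    have hle1 : 2 ^ k ≤ n ^ m := by exact_mod_cast hle1R
    have hle2 : n ^ m ≤ 2 ^ (k + 1) := by exact_mod_cast hle2R
    -- L bounds
    have hL1 : (k:ℝ) ≤ (m:ℝ) * L n := by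
      have := hmono (2 ^ k) (n ^ m) (Nat.one_le_two_pow) hle1
      rwa [h2pow, hpow n m (by omega) hm] at this
    have hL2 : (m:ℝ) * L n ≤ (k:ℝ) + 1 := by
      have := hmono (n ^ m) (2 ^ (k+1)) (Nat.one_le_pow _ _ (by omega)) hle2
      rw [h2pow, hpow n m (by omega) hm] at this
      push_cast at this
      linarith
    have hm0 : (0:ℝ) < m := by exact_mod_cast hm
    have hfinal : |L n - Real.logb 2 n| ≤ 1 / m := by
      have heq : L n - Real.logb 2 n = ((m:ℝ) * L n - x) / m := by
        field_simp [hx]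
        ring
      rw [heq, abs_div, abs_of_pos hm0]
      gcongr
      rw [abs_le]
      constructor <;> linarith
    exact ⟨habs, hle1, hle2, hfinal⟩
  refine ⟨key, ?_⟩
  have hd : ∀ m : ℕ, 1 ≤ m → |L n - Real.logb 2 n| ≤ 1 / m := fun m hm => (key m hm).2.2.2
  by_contra hne
  have hdpos : 0 < |L n - Real.logb 2 n| := abs_pos.mpr (sub_ne_zero.mpr hne)
  obtain ⟨m, hm⟩ := exists_nat_one_div_lt hdpos
  have := hd (m + 1) (by omega)
  push_cast at this
  linarith
end
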